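/- For each layer index α ∈ {1,…,M}, the pressure-gradient term admits the rewriting h (∇p̄_α + g ρ_α ∇z̄_α) = g m_α ∇(z_B + h) + g h² ((1/2) l_α + Σ_{β=α+1}^{M} l_β) ∇ρ_α + g h Σ_{β=α+1}^{M} l_β ∇(m_β − m_α) at every point of U. -/

import Mathlib

/-- Gradient in the two horizontal variables of a scalar field on `ℝ²`. -/
noncomputable def grad2 (f : (Fin 2 → ℝ) → ℝ) (x : Fin 2 → ℝ) : Fin 2 → ℝ :=
  fun k => fderiv ℝ f x (Pi.single k 1)

theorem grad2_of_hasFDerivAt {f : (Fin 2 → ℝ) → ℝ} {f' : (Fin 2 → ℝ) →L[ℝ] ℝ}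
    {x : Fin 2 → ℝ} (hf : HasFDerivAt f f' x) :
    grad2 f x = fun k => f' (Pi.single k 1) := by
  funext k
  rw [grad2, hf.fderiv]

/-- Key scalar identity with the sums abstracted. -/
theorem key_scalar_pg (g lα h ρα a z pα S1 : ℝ) (s : Finset ℕ) (l ρv pv : ℕ → ℝ)
    (hS : S1 + lα + ∑ β ∈ s, l β = 1) :
    h * (((1/2)*g*lα * (ρα * a + h * pα) + ∑ β ∈ s, g * l β * (ρv β * a + h * pv β))
        + g * ρα * (z + ((1/2)*lα + S1) * a)) =
    g * (ρα * h) * (z + a)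
      + g * h^2 * ((1/2)*lα + ∑ β ∈ s, l β) * pα
      + g * h * ∑ β ∈ s, l β * ((ρv β * a + h * pv β) - (ρα * a + h * pα)) := by
  have e1 : ∑ β ∈ s, g * l β * (ρv β * a + h * pv β)
      = g * a * (∑ β ∈ s, l β * ρv β) + g * h * (∑ β ∈ s, l β * pv β) := by
    rw [Finset.mul_sum, Finset.mul_sum, ← Finset.sum_add_distrib]
    exact Finset.sum_congr rfl fun β _ => by ring
  have e2 : ∑ β ∈ s, l β * ((ρv β * a + h * pv β) - (ρα * a + h * pα))
      = a * (∑ β ∈ s, l β * ρv β) + h * (∑ β ∈ s, l β * pv β)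
        - (ρα * a + h * pα) * (∑ β ∈ s, l β) := by
    rw [Finset.mul_sum, Finset.mul_sum, Finset.mul_sum, ← Finset.sum_add_distrib,
      ← Finset.sum_sub_distrib]
    exact Finset.sum_congr rfl fun β _ => by ring
  have hS1 : S1 = 1 - lα - ∑ β ∈ s, l β := by linarith
  rw [e1, e2, hS1]; ring

/-- On an open set `U ⊆ ℝ²`, with gravity `g`, `M ≥ 1` layers, layer proportions
`l β > 0` summing to `1`, constant surface pressure `pS`, differentiable fluid height
`h`, bottom topography `zB` and layer densities `ρ α`, and with `m β = ρ β * h`,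
`p̄ α = pS + (1/2) g l α m α + ∑_{β=α+1}^M g l β m β` and
`z̄ α = zB + (1/2) l α h + ∑_{β=1}^{α-1} l β h`: for each layer index `α ∈ {1,…,M}`,
the pressure-gradient term admits the rewriting
`h (∇p̄_α + g ρ_α ∇z̄_α) = g m_α ∇(z_B + h)
  + g h² ((1/2) l_α + ∑_{β=α+1}^M l_β) ∇ρ_α + g h ∑_{β=α+1}^M l_β ∇(m_β − m_α)`
at every point of `U`. -/
theorem pressure_gradient_rewriting
    (U : Set (Fin 2 → ℝ)) (hU : IsOpen U)
    (g : ℝ) (M : ℕ) (hM : 1 ≤ M)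
    (l : ℕ → ℝ) (hl : ∀ β ∈ Finset.Icc 1 M, 0 < l β)
    (hlsum : ∑ β ∈ Finset.Icc 1 M, l β = 1)
    (pS : ℝ)
    (h zB : (Fin 2 → ℝ) → ℝ) (ρ : ℕ → (Fin 2 → ℝ) → ℝ)
    (hh : DifferentiableOn ℝ h U) (hzB : DifferentiableOn ℝ zB U)
    (hρ : ∀ α ∈ Finset.Icc 1 M, DifferentiableOn ℝ (ρ α) U)
    (m : ℕ → (Fin 2 → ℝ) → ℝ) (hm : ∀ β x, m β x = ρ β x * h x)
    (pbar zbar : ℕ → (Fin 2 → ℝ) → ℝ)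
    (hpbar : ∀ α x, pbar α x =
      pS + (1 / 2) * g * l α * m α x + ∑ β ∈ Finset.Icc (α + 1) M, g * l β * m β x)
    (hzbar : ∀ α x, zbar α x =
      zB x + (1 / 2) * l α * h x + ∑ β ∈ Finset.Icc 1 (α - 1), l β * h x) :
    ∀ α ∈ Finset.Icc 1 M, ∀ x ∈ U,
      h x • (grad2 (pbar α) x + (g * ρ α x) • grad2 (zbar α) x) =
        (g * m α x) • grad2 (fun y => zB y + h y) x
        + (g * h x ^ 2 * ((1 / 2) * l α + ∑ β ∈ Finset.Icc (α + 1) M, l β)) • grad2 (ρ α) x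
        + (g * h x) • ∑ β ∈ Finset.Icc (α + 1) M, l β • grad2 (fun y => m β y - m α y) x := by
  intro α hα x hx
  obtain ⟨hα1, hαM⟩ := Finset.mem_Icc.mp hα
  have hxU : U ∈ nhds x := hU.mem_nhds hx
  -- base derivatives
  have hhx : HasFDerivAt h (fderiv ℝ h x) x :=
    (hh.differentiableAt hxU).hasFDerivAt
  have hzx : HasFDerivAt zB (fderiv ℝ zB x) x :=
    (hzB.differentiableAt hxU).hasFDerivAt
  have hρx : ∀ β ∈ Finset.Icc 1 M, HasFDerivAt (ρ β) (fderiv ℝ (ρ β) x) x :=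
    fun β hβ => ((hρ β hβ).differentiableAt hxU).hasFDerivAt
  set H : (Fin 2 → ℝ) →L[ℝ] ℝ := fderiv ℝ h x with hH
  set Z : (Fin 2 → ℝ) →L[ℝ] ℝ := fderiv ℝ zB x with hZ
  -- subset fact
  have hsub : Finset.Icc (α + 1) M ⊆ Finset.Icc 1 M := by
    intro β hβ
    obtain ⟨h1, h2⟩ := Finset.mem_Icc.mp hβ
    exact Finset.mem_Icc.mpr ⟨le_trans (by omega) h1, h2⟩
  -- derivative of m β
  have hmd : ∀ β ∈ Finset.Icc 1 M,
      HasFDerivAt (m β) (ρ β x • H + h x • fderiv ℝ (ρ β) x) x := by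
    intro β hβ
    have := (hρx β hβ).mul hhx
    rwa [show (ρ β * h) = m β from funext fun y => (hm β y).symm] at this
  -- derivative of pbar α
  have hαmem : α ∈ Finset.Icc 1 M := hα
  have hpd : HasFDerivAt (pbar α)
      (((1/2)*g*l α) • (ρ α x • H + h x • fderiv ℝ (ρ α) x)
        + ∑ β ∈ Finset.Icc (α + 1) M,
            (g * l β) • (ρ β x • H + h x • fderiv ℝ (ρ β) x)) x := by
    have : HasFDerivAt (fun y => pS + (1/2)*g*l α * m α y
        + ∑ β ∈ Finset.Icc (α + 1) M, g * l β * m β y)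
        ((0 : (Fin 2 → ℝ) →L[ℝ] ℝ) + ((1/2)*g*l α) • (ρ α x • H + h x • fderiv ℝ (ρ α) x)
          + ∑ β ∈ Finset.Icc (α + 1) M,
              (g * l β) • (ρ β x • H + h x • fderiv ℝ (ρ β) x)) x := by
      exact ((hasFDerivAt_const pS x).add ((hmd α hαmem).const_mul _)).add
        (HasFDerivAt.fun_sum fun β hβ => (hmd β (hsub hβ)).const_mul _)
    rw [zero_add] at this
    rwa [show (fun y => pS + (1/2)*g*l α * m α y
        + ∑ β ∈ Finset.Icc (α + 1) M, g * l β * m β y) = pbar α from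
      funext fun y => (hpbar α y).symm] at this
  -- derivative of zbar α
  have hzd : HasFDerivAt (zbar α)
      (Z + ((1/2)*l α) • H + ∑ β ∈ Finset.Icc 1 (α - 1), l β • H) x := by
    have : HasFDerivAt (fun y => zB y + (1/2)*l α * h y
        + ∑ β ∈ Finset.Icc 1 (α - 1), l β * h y)
        (Z + ((1/2)*l α) • H + ∑ β ∈ Finset.Icc 1 (α - 1), l β • H) x :=
      (hzx.add (hhx.const_mul _)).add (HasFDerivAt.fun_sum fun β _ => hhx.const_mul _)
    rwa [show (fun y => zB y + (1/2)*l α * h y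
        + ∑ β ∈ Finset.Icc 1 (α - 1), l β * h y) = zbar α from
      funext fun y => (hzbar α y).symm] at this
  -- derivatives of RHS functions
  have hzh : HasFDerivAt (fun y => zB y + h y) (Z + H) x := hzx.add hhx
  have hmm : ∀ β ∈ Finset.Icc (α + 1) M,
      HasFDerivAt (fun y => m β y - m α y)
        ((ρ β x • H + h x • fderiv ℝ (ρ β) x) - (ρ α x • H + h x • fderiv ℝ (ρ α) x)) x :=
    fun β hβ => (hmd β (hsub hβ)).sub (hmd α hαmem)
  -- layer proportion splitting
  have hsplit : (∑ β ∈ Finset.Icc 1 (α - 1), l β) + l α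
      + ∑ β ∈ Finset.Icc (α + 1) M, l β = 1 := by
    have e0 : Finset.Icc 1 (α - 1) = Finset.Ico 1 α := by
      rw [← Finset.Ico_add_one_right_eq_Icc]
      congr 1
      omega
    have e1 : Finset.Icc (α + 1) M = Finset.Ico (α + 1) (M + 1) := (Finset.Ico_add_one_right_eq_Icc _ _).symm
    have e2 : Finset.Icc 1 M = Finset.Ico 1 (M + 1) := (Finset.Ico_add_one_right_eq_Icc _ _).symm
    rw [e0, e1, ← hlsum, e2,
      ← Finset.sum_Ico_consecutive l hα1 (by omega : α ≤ M + 1),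
      Finset.sum_eq_sum_Ico_succ_bot (by omega : α < M + 1) l]
    ring
  -- now compute componentwise
  have hgρ : ∀ β ∈ Finset.Icc (α + 1) M,
      grad2 (fun y => m β y - m α y) x
        = fun k => ((ρ β x • H + h x • fderiv ℝ (ρ β) x)
            - (ρ α x • H + h x • fderiv ℝ (ρ α) x)) (Pi.single k 1) := by
    intro β hβ
    exact grad2_of_hasFDerivAt (hmm β hβ)
  funext k
  rw [Finset.sum_congr rfl fun β hβ => congrArg (l β • ·) (hgρ β hβ),
    grad2_of_hasFDerivAt hpd, grad2_of_hasFDerivAt hzd, grad2_of_hasFDerivAt hzh,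
    grad2_of_hasFDerivAt (hρx α hαmem)]
  simp only [Pi.add_apply, Pi.smul_apply, smul_eq_mul, Finset.sum_apply,
    ContinuousLinearMap.add_apply, ContinuousLinearMap.smul_apply,
    ContinuousLinearMap.coe_sum', ContinuousLinearMap.sub_apply, Finset.sum_apply']
  have key := key_scalar_pg g (l α) (h x) (ρ α x) (H (Pi.single k 1)) (Z (Pi.single k 1))
    (fderiv ℝ (ρ α) x (Pi.single k 1)) (∑ β ∈ Finset.Icc 1 (α - 1), l β)
    (Finset.Icc (α + 1) M) l (fun β => ρ β x) (fun β => fderiv ℝ (ρ β) x (Pi.single k 1))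
    hsplit
  rw [hm α x]
  rw [← Finset.sum_mul]
  beta_reduce at key
  linear_combination key
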